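/- Stretching Lemma, parts (2) and (3): Let σ be a turn sequence with at least one turn. If a point p = (0,b) with b ≠ 0 is reachable by σ, then the entire halfplane H⁺(p) is contained in A(σ); and if a point p = (a,0) with a ≠ 0 is reachable by σ, then the entire halfplane V⁺(p) is contained in A(σ). -/

import Mathlib

/-- A turn: left (`L`) or right (`R`). -/
inductive Turn : Type
  | L : Turn
  | R : Turn
  deriving DecidableEq

/-- Rotation of a direction vector by 90° counterclockwise. -/
def rotCCW (d : ℤ × ℤ) : ℤ × ℤ := (-d.2, d.1)

/-- Rotation of a direction vector by 90° clockwise. -/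
def rotCW (d : ℤ × ℤ) : ℤ × ℤ := (d.2, -d.1)

/-- Unit direction of the axis-parallel segment from `u` to `v`. -/
def unitDir (u v : ℤ × ℤ) : ℤ × ℤ := ((v.1 - u.1).sign, (v.2 - u.2).sign)

/-- The set of integer points on the axis-parallel closed segment from `u` to `v`. -/
def segSet (u v : ℤ × ℤ) : Set (ℤ × ℤ) :=
  {q | min u.1 v.1 ≤ q.1 ∧ q.1 ≤ max u.1 v.1 ∧ min u.2 v.2 ≤ q.2 ∧ q.2 ≤ max u.2 v.2}

/-- A simple rectilinear chain realizing the turn sequence `σ = σ₁⋯σₙ` (as a list,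
`σ.get ⟨i, _⟩` is the `(i+1)`-st turn `σ_{i+1}`).  It consists of the points
`pts 0, …, pts (n+1)` with `pts 0 = (0,0)`; consecutive points span nondegenerate
axis-parallel segments, the first segment heads east, the chain turns left (CCW) or
right (CW) at each bend as prescribed by `σ`, and the chain is simple. -/
structure Chain (σ : List Turn) where
  pts : ℕ → ℤ × ℤ
  start_eq : pts 0 = (0, 0)
  first_seg : ∃ t : ℤ, 0 < t ∧ pts 1 = (t, 0)
  axis_parallel : ∀ i ≤ σ.length,
    ((pts (i + 1)).1 = (pts i).1 ∧ (pts (i + 1)).2 ≠ (pts i).2) ∨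
    ((pts (i + 1)).2 = (pts i).2 ∧ (pts (i + 1)).1 ≠ (pts i).1)
  turns : ∀ i, ∀ h : i < σ.length,
    unitDir (pts (i + 1)) (pts (i + 2)) =
      (if σ.get ⟨i, h⟩ = Turn.L then rotCCW else rotCW) (unitDir (pts i) (pts (i + 1)))
  simple_adj : ∀ i, i + 1 ≤ σ.length →
    segSet (pts i) (pts (i + 1)) ∩ segSet (pts (i + 1)) (pts (i + 2)) = {pts (i + 1)}
  simple_nonadj : ∀ i j, i + 1 < j → j ≤ σ.length →
    segSet (pts i) (pts (i + 1)) ∩ segSet (pts j) (pts (j + 1)) = ∅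

/-- `A(σ)`: the set of points reachable by the turn sequence `σ`. -/
def ReachSet (σ : List Turn) : Set (ℤ × ℤ) :=
  {q | ∃ C : Chain σ, C.pts (σ.length + 1) = q}

/-- The halfplane `V⁺(p)` (requires `p.1 ≠ 0` to be meaningful). -/
def Vplus (p : ℤ × ℤ) : Set (ℤ × ℤ) :=
  {q | ∃ i j : ℤ, 0 ≤ i ∧ q = (p.1 + p.1.sign * i, j)}

/-- The halfplane `H⁺(p)` (requires `p.2 ≠ 0` to be meaningful). -/
def Hplus (p : ℤ × ℤ) : Set (ℤ × ℤ) :=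
  {q | ∃ i j : ℤ, 0 ≤ j ∧ q = (i, p.2 + p.2.sign * j)}

/-- The quadrant `Q⁺(p)`. -/
def Qplus (p : ℤ × ℤ) : Set (ℤ × ℤ) := Vplus p ∩ Hplus p

/-- A staircase: consecutive turns always differ. -/
def IsStaircase (σ : List Turn) : Prop := σ.Chain' (· ≠ ·)

/-- The prefix number `δᵢ`: number of `L`s minus number of `R`s among the first `i` turns. -/
def delta (σ : List Turn) (i : ℕ) : ℤ :=
  ((σ.take i).count Turn.L : ℤ) - ((σ.take i).count Turn.R : ℤ)

/-- The excess number `l - r` of a turn sequence. -/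
def excess (σ : List Turn) : ℤ := (σ.count Turn.L : ℤ) - (σ.count Turn.R : ℤ)

/-- `σ` has a hook (two equal consecutive turns, at 1-based positions `k+1, k+2`)
whose prefix number is `≡ d (mod 4)`: `d = 0, 1, 2, 3` for right, up, left, down hooks. -/
def HasHook (σ : List Turn) (d : ℤ) : Prop :=
  ∃ k, ∃ h : k + 1 < σ.length,
    σ.get ⟨k, by omega⟩ = σ.get ⟨k + 1, h⟩ ∧ delta σ (k + 1) % 4 = d

/-- `σ` has some hook, i.e. two equal consecutive turns. -/
def HasAnyHook (σ : List Turn) : Prop :=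
  ∃ k, ∃ h : k + 1 < σ.length, σ.get ⟨k, by omega⟩ = σ.get ⟨k + 1, h⟩

/-- A set `S ⊆ ℤ²` is connected: any two points of `S` are joined by a path inside `S`
whose consecutive points are at `L¹`-distance `1`. -/
def GridConnected (S : Set (ℤ × ℤ)) : Prop :=
  ∀ p ∈ S, ∀ q ∈ S, ∃ (n : ℕ) (f : ℕ → ℤ × ℤ),
    f 0 = p ∧ f n = q ∧ (∀ i ≤ n, f i ∈ S) ∧
    ∀ i < n, |(f (i + 1)).1 - (f i).1| + |(f (i + 1)).2 - (f i).2| = 1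

/-- `q` lies on the boundary of the smallest axis-parallel bounding box of the chain `C`
(for `q` a point of the chain: it attains an extreme coordinate). -/
def OnBBoxBoundary (σ : List Turn) (C : Chain σ) (q : ℤ × ℤ) : Prop :=
  (∀ i ≤ σ.length + 1, q.1 ≤ (C.pts i).1) ∨ (∀ i ≤ σ.length + 1, (C.pts i).1 ≤ q.1) ∨
  (∀ i ≤ σ.length + 1, q.2 ≤ (C.pts i).2) ∨ (∀ i ≤ σ.length + 1, (C.pts i).2 ≤ q.2)

/-- The last segment of the chain `C` is entirely contained in one side of the smallest
axis-parallel bounding box of `C`. -/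
def LastSegOnSide (σ : List Turn) (C : Chain σ) : Prop :=
  ((C.pts σ.length).1 = (C.pts (σ.length + 1)).1 ∧
     ∀ i ≤ σ.length + 1, (C.pts σ.length).1 ≤ (C.pts i).1) ∨
  ((C.pts σ.length).1 = (C.pts (σ.length + 1)).1 ∧
     ∀ i ≤ σ.length + 1, (C.pts i).1 ≤ (C.pts σ.length).1) ∨
  ((C.pts σ.length).2 = (C.pts (σ.length + 1)).2 ∧
     ∀ i ≤ σ.length + 1, (C.pts σ.length).2 ≤ (C.pts i).2) ∨
  ((C.pts σ.length).2 = (C.pts (σ.length + 1)).2 ∧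
     ∀ i ≤ σ.length + 1, (C.pts i).2 ≤ (C.pts σ.length).2)

/-- The turn `σₘ` (1-based indexing). -/
def turnAt (σ : List Turn) (m : ℕ) : Turn := σ.getD (m - 1) Turn.L

/-- The suffix `σ_k ⋯ σ_n` contains no hook and all its prefix numbers `δᵢ`,
`k - 1 ≤ i ≤ n`, are `≡ 1` or `2 (mod 4)` (the combinatorial description of a
NW-staircase containing the endpoint). -/
def GoodSuffix (σ : List Turn) (k : ℕ) : Prop :=
  1 ≤ k ∧ k ≤ σ.length ∧
  (∀ m : ℕ, k ≤ m → m < σ.length → turnAt σ m ≠ turnAt σ (m + 1)) ∧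
  (∀ i : ℕ, k - 1 ≤ i → i ≤ σ.length → delta σ i % 4 = 1 ∨ delta σ i % 4 = 2)

open Classical in
/-- `₋ₓm₊ᵧᵖ(σ)`: taking the longest good suffix (i.e. the least `k` with
`GoodSuffix σ k`), the number of indices `i` with `k - 1 ≤ i ≤ n` and
`δᵢ ≡ 1 (mod 4)`; `0` if no good suffix exists. -/
noncomputable def mNWp (σ : List Turn) : ℕ :=
  if ∃ k, GoodSuffix σ k then
    Nat.card {i : ℕ // sInf {k | GoodSuffix σ k} - 1 ≤ i ∧ i ≤ σ.length ∧
      delta σ i % 4 = 1}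
  else 0

/-- The number of vertical segments of the chain `C` meeting the closed horizontal
segment from the origin to `(a, 0)`. -/
def verticalCrossCount (σ : List Turn) (C : Chain σ) (a : ℤ) : ℕ :=
  ((Finset.range (σ.length + 1)).filter fun i =>
    (C.pts i).1 = (C.pts (i + 1)).1 ∧
    0 ≤ (C.pts i).1 ∧ (C.pts i).1 ≤ a ∧
    min (C.pts i).2 (C.pts (i + 1)).2 ≤ 0 ∧ 0 ≤ max (C.pts i).2 (C.pts (i + 1)).2).card

/-- The unit direction of the `(i+1)`-st segment of the chain `C`. -/
def dirOf (σ : List Turn) (C : Chain σ) (i : ℕ) : ℤ × ℤ := unitDir (C.pts i) (C.pts (i + 1))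

/-- `z₁mz₂ᵒ(C)`: the number of `z₂`-segments in the maximal `(z₁,z₂)`-staircase subchain
of `C` containing the origin (the longest prefix of segments directed `z₁` or `z₂`);
`0` if no such subchain exists. -/
noncomputable def stairCountO (σ : List Turn) (C : Chain σ) (z₁ z₂ : ℤ × ℤ) : ℕ :=
  Nat.card {i : ℕ // i ≤ σ.length ∧ dirOf σ C i = z₂ ∧
    ∀ j ≤ i, dirOf σ C j = z₁ ∨ dirOf σ C j = z₂}

/-- `z₁mz₂ᵖ(C)`: the number of `z₂`-segments in the maximal `(z₁,z₂)`-staircase subchain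
of `C` containing the endpoint (the longest suffix of segments directed `z₁` or `z₂`);
`0` if no such subchain exists. -/
noncomputable def stairCountP (σ : List Turn) (C : Chain σ) (z₁ z₂ : ℤ × ℤ) : ℕ :=
  Nat.card {i : ℕ // i ≤ σ.length ∧ dirOf σ C i = z₂ ∧
    ∀ j, i ≤ j → j ≤ σ.length → dirOf σ C j = z₁ ∨ dirOf σ C j = z₂}

section Helpers

lemma mem_segSet {u v p : ℤ × ℤ} :
    p ∈ segSet u v ↔ min u.1 v.1 ≤ p.1 ∧ p.1 ≤ max u.1 v.1 ∧
      min u.2 v.2 ≤ p.2 ∧ p.2 ≤ max u.2 v.2 := Iff.rfl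

lemma sign_congr {a b : ℤ} (h : (0 < a ∧ 0 < b) ∨ (a = 0 ∧ b = 0) ∨ (a < 0 ∧ b < 0)) :
    a.sign = b.sign := by
  rcases h with ⟨h1, h2⟩ | ⟨h1, h2⟩ | ⟨h1, h2⟩
  · rw [Int.sign_eq_one_of_pos h1, Int.sign_eq_one_of_pos h2]
  · rw [h1, h2]
  · rw [Int.sign_eq_neg_one_of_neg h1, Int.sign_eq_neg_one_of_neg h2]

lemma sign_sub_map {φ : ℤ → ℤ} (hφ : StrictMono φ) (a b : ℤ) :
    (φ b - φ a).sign = (b - a).sign := by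
  rcases lt_trichotomy a b with h | h | h
  · exact sign_congr (Or.inl ⟨sub_pos.mpr (hφ h), sub_pos.mpr h⟩)
  · rw [h]; simp
  · exact sign_congr (Or.inr (Or.inr ⟨sub_neg.mpr (hφ h), sub_neg.mpr h⟩))

lemma unitDir_map {φ ψ : ℤ → ℤ} (hφ : StrictMono φ) (hψ : StrictMono ψ) (a b : ℤ × ℤ) :
    unitDir (φ a.1, ψ a.2) (φ b.1, ψ b.2) = unitDir a b := by
  unfold unitDir
  simp only
  rw [sign_sub_map hφ, sign_sub_map hψ]

lemma singleton_scalars {u v w z p : ℤ × ℤ} (h : segSet u v ∩ segSet w z = {p}) :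
    max (min u.1 v.1) (min w.1 z.1) = p.1 ∧ min (max u.1 v.1) (max w.1 z.1) = p.1 ∧
    max (min u.2 v.2) (min w.2 z.2) = p.2 ∧ min (max u.2 v.2) (max w.2 z.2) = p.2 := by
  rw [Set.ext_iff] at h
  have hp := (h p).mpr rfl
  simp only [Set.mem_inter_iff, mem_segSet, Set.mem_singleton_iff] at h hp
  have h1 := h (max (min u.1 v.1) (min w.1 z.1), p.2)
  have h2 := h (min (max u.1 v.1) (max w.1 z.1), p.2)
  have h3 := h (p.1, max (min u.2 v.2) (min w.2 z.2))
  have h4 := h (p.1, min (max u.2 v.2) (max w.2 z.2))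
  simp only [Prod.ext_iff] at h1 h2 h3 h4
  omega

lemma empty_scalars {u v w z : ℤ × ℤ} (h : segSet u v ∩ segSet w z = ∅) :
    min (max u.1 v.1) (max w.1 z.1) < max (min u.1 v.1) (min w.1 z.1) ∨
    min (max u.2 v.2) (max w.2 z.2) < max (min u.2 v.2) (min w.2 z.2) := by
  by_contra hc
  push_neg at hc
  have : (max (min u.1 v.1) (min w.1 z.1), max (min u.2 v.2) (min w.2 z.2)) ∈
      segSet u v ∩ segSet w z := by
    simp only [Set.mem_inter_iff, mem_segSet]
    omega
  rw [h] at this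
  exact this

lemma interval_map {φ : ℤ → ℤ} (hφ : StrictMono φ) {a b c d x p : ℤ}
    (h1 : max (min a b) (min c d) = p) (h2 : min (max a b) (max c d) = p)
    (ha : min (φ a) (φ b) ≤ x) (hb : x ≤ max (φ a) (φ b))
    (hc : min (φ c) (φ d) ≤ x) (hd : x ≤ max (φ c) (φ d)) : x = φ p := by
  have k1 := congrArg φ h1
  have k2 := congrArg φ h2
  simp only [hφ.monotone.map_min, hφ.monotone.map_max] at k1 k2
  omega

lemma interval_disj {φ : ℤ → ℤ} (hφ : StrictMono φ) {a b c d x : ℤ}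
    (h : min (max a b) (max c d) < max (min a b) (min c d))
    (ha : min (φ a) (φ b) ≤ x) (hb : x ≤ max (φ a) (φ b))
    (hc : min (φ c) (φ d) ≤ x) (hd : x ≤ max (φ c) (φ d)) : False := by
  have h2 := hφ h
  simp only [hφ.monotone.map_min, hφ.monotone.map_max] at h2
  omega

end Helpers

/-- Applying strictly monotone coordinate maps fixing 0 to a chain yields a chain. -/
def chainMap {σ : List Turn} (φ ψ : ℤ → ℤ) (hφ : StrictMono φ) (hψ : StrictMono ψ)
    (hφ0 : φ 0 = 0) (hψ0 : ψ 0 = 0) (C : Chain σ) : Chain σ where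
  pts i := (φ (C.pts i).1, ψ (C.pts i).2)
  start_eq := by rw [C.start_eq]; simp [hφ0, hψ0]
  first_seg := by
    obtain ⟨t, ht, h1⟩ := C.first_seg
    exact ⟨φ t, by rw [← hφ0]; exact hφ ht, by rw [h1]; simp [hψ0]⟩
  axis_parallel := by
    intro i hi
    dsimp only
    rcases C.axis_parallel i hi with ⟨h1, h2⟩ | ⟨h1, h2⟩
    · exact Or.inl ⟨by rw [h1], fun h => h2 (hψ.injective h)⟩
    · exact Or.inr ⟨by rw [h1], fun h => h2 (hφ.injective h)⟩
  turns := by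
    intro i hi
    have ht := C.turns i hi
    rw [unitDir_map hφ hψ, unitDir_map hφ hψ]
    exact ht
  simple_adj := by
    intro i hi
    have h := C.simple_adj i hi
    obtain ⟨s1, s2, s3, s4⟩ := singleton_scalars h
    apply Set.eq_singleton_iff_unique_mem.mpr
    constructor
    · simp only [Set.mem_inter_iff, mem_segSet]
      refine ⟨⟨min_le_right _ _, le_max_right _ _, min_le_right _ _, le_max_right _ _⟩,
        ⟨min_le_left _ _, le_max_left _ _, min_le_left _ _, le_max_left _ _⟩⟩
    · intro x hx
      simp only [Set.mem_inter_iff, mem_segSet] at hx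
      obtain ⟨⟨a1, a2, a3, a4⟩, ⟨b1, b2, b3, b4⟩⟩ := hx
      exact Prod.ext (interval_map hφ s1 s2 a1 a2 b1 b2) (interval_map hψ s3 s4 a3 a4 b3 b4)
  simple_nonadj := by
    intro i j hij hj
    have h := C.simple_nonadj i j hij hj
    apply Set.eq_empty_iff_forall_notMem.mpr
    intro x hx
    simp only [Set.mem_inter_iff, mem_segSet] at hx
    obtain ⟨⟨a1, a2, a3, a4⟩, ⟨b1, b2, b3, b4⟩⟩ := hx
    rcases empty_scalars h with hs | hs
    · exact interval_disj hφ hs a1 a2 b1 b2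
    · exact interval_disj hψ hs a3 a4 b3 b4

lemma reach_map {σ : List Turn} {x y : ℤ} (φ ψ : ℤ → ℤ) (hφ : StrictMono φ)
    (hψ : StrictMono ψ) (hφ0 : φ 0 = 0) (hψ0 : ψ 0 = 0)
    (h : ((x, y) : ℤ × ℤ) ∈ ReachSet σ) : ((φ x, ψ y) : ℤ × ℤ) ∈ ReachSet σ := by
  obtain ⟨C, hC⟩ := h
  exact ⟨chainMap φ ψ hφ hψ hφ0 hψ0 C, by simp only [chainMap, hC]⟩

lemma sign_zero_iff {a : ℤ} : a.sign = 0 ↔ a = 0 := Int.sign_eq_zero_iff_zero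

lemma perp {σ : List Turn} (C : Chain σ) {i : ℕ} (h : i < σ.length) :
    ((C.pts (i+1)).1 = (C.pts i).1 → (C.pts (i+2)).2 = (C.pts (i+1)).2) ∧
    ((C.pts (i+1)).2 = (C.pts i).2 → (C.pts (i+2)).1 = (C.pts (i+1)).1) := by
  have ht := C.turns i h
  have h1 := congrArg Prod.fst ht
  have h2 := congrArg Prod.snd ht
  rcases h3 : σ.get ⟨i, h⟩ with _ | _ <;> rw [h3] at h1 h2 <;>
    simp only [unitDir, rotCCW, rotCW, if_pos, if_neg, reduceCtorEq, ite_true, ite_false] at h1 h2 <;>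
    constructor <;> intro hv
  · have h0 : (C.pts (i+1)).1 - (C.pts i).1 = 0 := by omega
    rw [h0] at h2; simp at h2; omega
  · have h0 : (C.pts (i+1)).2 - (C.pts i).2 = 0 := by omega
    rw [h0] at h1; simp at h1; omega
  · have h0 : (C.pts (i+1)).1 - (C.pts i).1 = 0 := by omega
    rw [h0] at h2; simp at h2; omega
  · have h0 : (C.pts (i+1)).2 - (C.pts i).2 = 0 := by omega
    rw [h0] at h1; simp at h1; omega

def strip (s m x : ℤ) : ℤ := if s * x ≤ 0 then x else x + s * m

lemma strip_mono {s m : ℤ} (hs : s = 1 ∨ s = -1) (hm : 0 ≤ m) : StrictMono (strip s m) := by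
  intro a b hab
  unfold strip
  rcases hs with h | h <;> subst h <;> split_ifs <;> omega

lemma strip_zero (s m : ℤ) : strip s m 0 = 0 := by simp [strip]

lemma strip_facts {s : ℤ} (hs : s = 1 ∨ s = -1) (x : ℤ) :
    strip s 1 x ≠ s ∧ (strip s 1 x = 0 ↔ x = 0) ∧
    (0 < strip s 1 x → s < strip s 1 x) ∧ (strip s 1 x < 0 → strip s 1 x < s) := by
  unfold strip
  rcases hs with h | h <;> subst h <;> split_ifs <;> omega


/-- Moving the endpoint of a chain along the same direction ray. -/
theorem newend {σ : List Turn} (C : Chain σ) (hn : 1 ≤ σ.length) (q : ℤ × ℤ)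
    (hdir : unitDir (C.pts σ.length) q = unitDir (C.pts σ.length) (C.pts (σ.length + 1)))
    (hsub : ∀ i, i < σ.length →
      segSet (C.pts i) (C.pts (i + 1)) ∩ segSet (C.pts σ.length) q ⊆
      segSet (C.pts i) (C.pts (i + 1)) ∩ segSet (C.pts σ.length) (C.pts (σ.length + 1))) :
    q ∈ ReachSet σ := by
  set n := σ.length with hnn
  have hd1 := congrArg Prod.fst hdir
  have hd2 := congrArg Prod.snd hdir
  simp only [unitDir] at hd1 hd2
  refine ⟨⟨fun k => if k = n + 1 then q else C.pts k, ?_, ?_, ?_, ?_, ?_, ?_⟩, ?_⟩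
  · have e0 : ¬(0 = n + 1) := by omega
    rw [if_neg e0, C.start_eq]
  · obtain ⟨t, ht, h1⟩ := C.first_seg
    refine ⟨t, ht, ?_⟩
    have e0 : ¬(1 = n + 1) := by omega
    rw [if_neg e0, h1]
  · intro i hi
    have e0 : ¬(i = n + 1) := by omega
    rw [if_neg e0]
    by_cases hc : i + 1 = n + 1
    · rw [if_pos hc]
      have hc' : i = n := by omega
      rw [hc']
      rcases C.axis_parallel n le_rfl with ⟨a1, a2⟩ | ⟨a1, a2⟩
      · refine Or.inl ⟨?_, ?_⟩
        · have h0 : ((C.pts (n+1)).1 - (C.pts n).1) = 0 := by omega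
          rw [h0] at hd1; simp only [Int.sign_zero] at hd1
          have := sign_zero_iff.mp hd1; omega
        · intro hq
          have h0 : (q.2 - (C.pts n).2) = 0 := by omega
          rw [h0] at hd2; simp only [Int.sign_zero] at hd2
          have := sign_zero_iff.mp hd2.symm; omega
      · refine Or.inr ⟨?_, ?_⟩
        · have h0 : ((C.pts (n+1)).2 - (C.pts n).2) = 0 := by omega
          rw [h0] at hd2; simp only [Int.sign_zero] at hd2
          have := sign_zero_iff.mp hd2; omega
        · intro hq
          have h0 : (q.1 - (C.pts n).1) = 0 := by omega
          rw [h0] at hd1; simp only [Int.sign_zero] at hd1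
          have := sign_zero_iff.mp hd1.symm; omega
    · rw [if_neg hc]
      exact C.axis_parallel i hi
  · intro i hi
    have e0 : ¬(i = n + 1) := by omega
    have e1 : ¬(i + 1 = n + 1) := by omega
    rw [if_neg e0, if_neg e1]
    by_cases hc : i + 2 = n + 1
    · rw [if_pos hc]
      have e2 : i + 1 = n := by omega
      have hd := hdir
      rw [← e2] at hd
      rw [hd]
      exact C.turns i hi
    · rw [if_neg hc]
      exact C.turns i hi
  · intro i hi
    have e0 : ¬(i = n + 1) := by omega
    have e1 : ¬(i + 1 = n + 1) := by omega
    rw [if_neg e0, if_neg e1]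
    by_cases hc : i + 2 = n + 1
    · rw [if_pos hc]
      have e2 : i + 1 = n := by omega
      have hs' := hsub i (by omega)
      rw [← e2] at hs'
      have hadj := C.simple_adj i hi
      apply Set.eq_singleton_iff_unique_mem.mpr
      refine ⟨⟨⟨min_le_right _ _, le_max_right _ _, min_le_right _ _, le_max_right _ _⟩,
        ⟨min_le_left _ _, le_max_left _ _, min_le_left _ _, le_max_left _ _⟩⟩, fun x hx => ?_⟩
      have hx2 := hs' hx
      rw [hadj] at hx2
      exact hx2
    · rw [if_neg hc]
      exact C.simple_adj i hi
  · intro i j hij hj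
    have e0 : ¬(i = n + 1) := by omega
    have e1 : ¬(i + 1 = n + 1) := by omega
    have e2 : ¬(j = n + 1) := by omega
    rw [if_neg e0, if_neg e1, if_neg e2]
    by_cases hc : j + 1 = n + 1
    · rw [if_pos hc]
      have e3 : j = n := by omega
      rw [e3]
      apply Set.eq_empty_iff_forall_notMem.mpr
      intro x hx
      have := hsub i (by omega) hx
      have h0 := C.simple_nonadj i n (by omega) le_rfl
      rw [h0] at this
      exact this
    · rw [if_neg hc]
      exact C.simple_nonadj i j hij hj
  · dsimp only
    rw [if_pos rfl]

lemma unitDir_of_sub_eq {u v w z : ℤ × ℤ} (h1 : v.1 - u.1 = z.1 - w.1)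
    (h2 : v.2 - u.2 = z.2 - w.2) : unitDir u v = unitDir w z := by
  unfold unitDir; rw [h1, h2]

lemma axis_transfer {u v w z : ℤ × ℤ} (h : unitDir w z = unitDir u v)
    (ha : (v.1 = u.1 ∧ v.2 ≠ u.2) ∨ (v.2 = u.2 ∧ v.1 ≠ u.1)) :
    (z.1 = w.1 ∧ z.2 ≠ w.2) ∨ (z.2 = w.2 ∧ z.1 ≠ w.1) := by
  have h1 := congrArg Prod.fst h
  have h2 := congrArg Prod.snd h
  simp only [unitDir] at h1 h2
  rcases ha with ⟨a1, a2⟩ | ⟨a1, a2⟩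
  · refine Or.inl ⟨?_, ?_⟩
    · have h0 : v.1 - u.1 = 0 := by omega
      rw [h0] at h1; simp only [Int.sign_zero] at h1
      have := sign_zero_iff.mp h1; omega
    · intro hz
      have h0 : z.2 - w.2 = 0 := by omega
      rw [h0] at h2; simp only [Int.sign_zero] at h2
      have := sign_zero_iff.mp h2.symm; omega
  · refine Or.inr ⟨?_, ?_⟩
    · have h0 : v.2 - u.2 = 0 := by omega
      rw [h0] at h2; simp only [Int.sign_zero] at h2
      have := sign_zero_iff.mp h2; omega
    · intro hz
      have h0 : z.1 - w.1 = 0 := by omega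
      rw [h0] at h1; simp only [Int.sign_zero] at h1
      have := sign_zero_iff.mp h1.symm; omega


/-- Moving the last two points of a chain (changing the length of the second-to-last
segment and translating the last segment). -/
theorem shift2 {σ : List Turn} (C : Chain σ) (m : ℕ) (hm : σ.length = m + 2) (r q : ℤ × ℤ)
    (hdir1 : unitDir (C.pts (m+1)) r = unitDir (C.pts (m+1)) (C.pts (m+2)))
    (hq1 : q.1 - r.1 = (C.pts (m+3)).1 - (C.pts (m+2)).1)
    (hq2 : q.2 - r.2 = (C.pts (m+3)).2 - (C.pts (m+2)).2)
    (H4 : segSet (C.pts m) (C.pts (m+1)) ∩ segSet (C.pts (m+1)) r = {C.pts (m+1)})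
    (H5 : segSet (C.pts (m+1)) r ∩ segSet r q = {r})
    (H2 : ∀ i, i + 2 < m + 2 → segSet (C.pts i) (C.pts (i+1)) ∩ segSet (C.pts (m+1)) r = ∅)
    (H3 : ∀ i, i + 1 < m + 2 → segSet (C.pts i) (C.pts (i+1)) ∩ segSet r q = ∅) :
    q ∈ ReachSet σ := by
  refine ⟨⟨fun k => if k = m + 2 then r else if k = m + 3 then q else C.pts k,
    ?_, ?_, ?_, ?_, ?_, ?_⟩, ?_⟩
  · rw [if_neg (show ¬(0 = m + 2) by omega), if_neg (show ¬(0 = m + 3) by omega), C.start_eq]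
  · obtain ⟨t, ht, h1⟩ := C.first_seg
    refine ⟨t, ht, ?_⟩
    rw [if_neg (show ¬(1 = m + 2) by omega), if_neg (show ¬(1 = m + 3) by omega), h1]
  · intro i hi
    rw [hm] at hi
    rcases Nat.lt_or_ge i (m + 1) with hc | hc
    · rw [if_neg (show ¬(i = m + 2) by omega), if_neg (show ¬(i = m + 3) by omega),
        if_neg (show ¬(i + 1 = m + 2) by omega), if_neg (show ¬(i + 1 = m + 3) by omega)]
      exact C.axis_parallel i (by omega)
    · rcases Nat.eq_or_lt_of_le hc with hc' | hc'
      · obtain rfl : i = m + 1 := by omega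
        rw [if_neg (show ¬(m + 1 = m + 2) by omega), if_neg (show ¬(m + 1 = m + 3) by omega),
          if_pos (show m + 1 + 1 = m + 2 by omega)]
        exact axis_transfer hdir1 (C.axis_parallel (m + 1) (by omega))
      · obtain rfl : i = m + 2 := by omega
        rw [if_pos (show m + 2 = m + 2 by omega), if_neg (show ¬(m + 2 + 1 = m + 2) by omega),
          if_pos (show m + 2 + 1 = m + 3 by omega)]
        exact axis_transfer (unitDir_of_sub_eq hq1 hq2) (C.axis_parallel (m + 2) (by omega))
  · intro i hi
    have hi' := hi
    rw [hm] at hi'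
    rcases Nat.lt_or_ge i m with hc | hc
    · rw [if_neg (show ¬(i = m + 2) by omega), if_neg (show ¬(i = m + 3) by omega),
        if_neg (show ¬(i + 1 = m + 2) by omega), if_neg (show ¬(i + 1 = m + 3) by omega),
        if_neg (show ¬(i + 2 = m + 2) by omega), if_neg (show ¬(i + 2 = m + 3) by omega)]
      exact C.turns i hi
    · rcases Nat.eq_or_lt_of_le hc with hc' | hc'
      · obtain rfl : m = i := hc'
        rw [if_neg (show ¬(m = m + 2) by omega), if_neg (show ¬(m = m + 3) by omega),
          if_neg (show ¬(m + 1 = m + 2) by omega), if_neg (show ¬(m + 1 = m + 3) by omega),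
          if_pos (show m + 2 = m + 2 by omega)]
        rw [hdir1]
        exact C.turns m hi
      · obtain rfl : i = m + 1 := by omega
        rw [if_neg (show ¬(m + 1 = m + 2) by omega), if_neg (show ¬(m + 1 = m + 3) by omega),
          if_pos (show m + 1 + 1 = m + 2 by omega), if_neg (show ¬(m + 1 + 2 = m + 2) by omega),
          if_pos (show m + 1 + 2 = m + 3 by omega)]
        rw [unitDir_of_sub_eq hq1 hq2, hdir1]
        exact C.turns (m + 1) hi
  · intro i hi
    rw [hm] at hi
    rcases Nat.lt_or_ge i m with hc | hc
    · rw [if_neg (show ¬(i = m + 2) by omega), if_neg (show ¬(i = m + 3) by omega),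
        if_neg (show ¬(i + 1 = m + 2) by omega), if_neg (show ¬(i + 1 = m + 3) by omega),
        if_neg (show ¬(i + 2 = m + 2) by omega), if_neg (show ¬(i + 2 = m + 3) by omega)]
      exact C.simple_adj i (by omega)
    · rcases Nat.eq_or_lt_of_le hc with hc' | hc'
      · obtain rfl : m = i := hc'
        rw [if_neg (show ¬(m = m + 2) by omega), if_neg (show ¬(m = m + 3) by omega),
          if_neg (show ¬(m + 1 = m + 2) by omega), if_neg (show ¬(m + 1 = m + 3) by omega),
          if_pos (show m + 2 = m + 2 by omega)]
        exact H4
      · obtain rfl : i = m + 1 := by omega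
        rw [if_neg (show ¬(m + 1 = m + 2) by omega), if_neg (show ¬(m + 1 = m + 3) by omega),
          if_pos (show m + 1 + 1 = m + 2 by omega), if_neg (show ¬(m + 1 + 2 = m + 2) by omega),
          if_pos (show m + 1 + 2 = m + 3 by omega)]
        exact H5
  · intro i j hij hj
    rw [hm] at hj
    rw [if_neg (show ¬(i = m + 2) by omega), if_neg (show ¬(i = m + 3) by omega),
      if_neg (show ¬(i + 1 = m + 2) by omega), if_neg (show ¬(i + 1 = m + 3) by omega)]
    rcases Nat.lt_or_ge j (m + 1) with hc | hc
    · rw [if_neg (show ¬(j = m + 2) by omega), if_neg (show ¬(j = m + 3) by omega),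
        if_neg (show ¬(j + 1 = m + 2) by omega), if_neg (show ¬(j + 1 = m + 3) by omega)]
      exact C.simple_nonadj i j hij (by omega)
    · rcases Nat.eq_or_lt_of_le hc with hc' | hc'
      · obtain rfl : j = m + 1 := by omega
        rw [if_neg (show ¬(m + 1 = m + 2) by omega), if_neg (show ¬(m + 1 = m + 3) by omega),
          if_pos (show m + 1 + 1 = m + 2 by omega)]
        exact H2 i (by omega)
      · obtain rfl : j = m + 2 := by omega
        rw [if_pos (show m + 2 = m + 2 by omega), if_neg (show ¬(m + 2 + 1 = m + 2) by omega),
          if_pos (show m + 2 + 1 = m + 3 by omega)]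
        exact H3 i (by omega)
  · dsimp only
    rw [hm]
    rw [if_neg (show ¬(m + 2 + 1 = m + 2) by omega), if_pos (show m + 2 + 1 = m + 3 by omega)]

lemma strip_straddle {s : ℤ} (hs : s = 1 ∨ s = -1) {a b : ℤ}
    (h1 : min (strip s 1 a) (strip s 1 b) ≤ s) (h2 : s ≤ max (strip s 1 a) (strip s 1 b)) :
    min a b ≤ 0 ∧ 0 ≤ max a b := by
  unfold strip at h1 h2
  rcases hs with h | h <;> subst h <;> split_ifs at h1 h2 <;> omega

lemma freshCol {σ : List Turn} (C : Chain σ) {s : ℤ} (hs : s = 1 ∨ s = -1)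
    (h0a : min (C.pts σ.length).1 (C.pts (σ.length + 1)).1 ≤ 0)
    (h0b : 0 ≤ max (C.pts σ.length).1 (C.pts (σ.length + 1)).1) :
    ∀ i, i + 1 < σ.length → ∀ y : ℤ,
      min (C.pts σ.length).2 (C.pts (σ.length + 1)).2 ≤ y →
      y ≤ max (C.pts σ.length).2 (C.pts (σ.length + 1)).2 →
      ((s, y) : ℤ × ℤ) ∉ segSet (strip s 1 (C.pts i).1, (C.pts i).2)
        (strip s 1 (C.pts (i + 1)).1, (C.pts (i + 1)).2) := by
  intro i hi y hy1 hy2 hmem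
  rw [mem_segSet] at hmem
  dsimp only at hmem
  obtain ⟨m1, m2, m3, m4⟩ := hmem
  rcases C.axis_parallel i (by omega) with ⟨a1, a2⟩ | ⟨a1, a2⟩
  · rw [a1] at m1 m2
    have := (strip_facts hs (C.pts i).1).1
    omega
  · obtain ⟨hx1, hx2⟩ := strip_straddle hs m1 m2
    have hne := C.simple_nonadj i σ.length hi le_rfl
    rw [Set.eq_empty_iff_forall_notMem] at hne
    refine hne ((0 : ℤ), y) ⟨?_, ?_⟩ <;> rw [mem_segSet] <;> dsimp only <;> omega

lemma freshRow {σ : List Turn} (C : Chain σ) {s : ℤ} (hs : s = 1 ∨ s = -1)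
    (h0a : min (C.pts σ.length).2 (C.pts (σ.length + 1)).2 ≤ 0)
    (h0b : 0 ≤ max (C.pts σ.length).2 (C.pts (σ.length + 1)).2) :
    ∀ i, i + 1 < σ.length → ∀ x : ℤ,
      min (C.pts σ.length).1 (C.pts (σ.length + 1)).1 ≤ x →
      x ≤ max (C.pts σ.length).1 (C.pts (σ.length + 1)).1 →
      ((x, s) : ℤ × ℤ) ∉ segSet ((C.pts i).1, strip s 1 (C.pts i).2)
        ((C.pts (i + 1)).1, strip s 1 (C.pts (i + 1)).2) := by
  intro i hi x hx1 hx2 hmem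
  rw [mem_segSet] at hmem
  dsimp only at hmem
  obtain ⟨m1, m2, m3, m4⟩ := hmem
  rcases C.axis_parallel i (by omega) with ⟨a1, a2⟩ | ⟨a1, a2⟩
  · obtain ⟨hy1, hy2⟩ := strip_straddle hs m3 m4
    have hne := C.simple_nonadj i σ.length hi le_rfl
    rw [Set.eq_empty_iff_forall_notMem] at hne
    refine hne (x, (0 : ℤ)) ⟨?_, ?_⟩ <;> rw [mem_segSet] <;> dsimp only <;> omega
  · rw [a1] at m3 m4
    have := (strip_facts hs (C.pts i).2).1
    omega

lemma seg1_vert {σ : List Turn} (C : Chain σ) (h : 1 ≤ σ.length) :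
    (C.pts 2).1 = (C.pts 1).1 := by
  obtain ⟨t, ht, h1⟩ := C.first_seg
  have h0 : 0 < σ.length := h
  have ht0 := C.turns 0 h0
  have hu : unitDir (C.pts 0) (C.pts 1) = (t.sign, 0) := by
    rw [C.start_eq, h1]; unfold unitDir; simp
  rw [hu] at ht0
  have h2 := congrArg Prod.fst ht0
  simp only [unitDir] at h2
  rcases h3 : σ.get ⟨0, h0⟩ with _ | _ <;> rw [h3] at h2 <;>
    simp only [rotCCW, rotCW, ite_true, ite_false, reduceCtorEq, neg_zero, Nat.zero_add] at h2
  · have := sign_zero_iff.mp h2; omega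
  · have := sign_zero_iff.mp h2; omega

lemma nudgeH {σ : List Turn} (hσ : 1 ≤ σ.length) {b : ℤ} (hb : b ≠ 0)
    (h : ((0 : ℤ), b) ∈ ReachSet σ) {s : ℤ} (hs : s = 1 ∨ s = -1) :
    ((s, b) : ℤ × ℤ) ∈ ReachSet σ := by
  obtain ⟨C, hC⟩ := h
  have hx0 : (C.pts (σ.length + 1)).1 = 0 := by rw [hC]
  have hy0 : (C.pts (σ.length + 1)).2 = b := by rw [hC]
  -- σ.length ≥ 2
  have hn2 : 2 ≤ σ.length := by
    by_contra hlt
    have hn1 : σ.length = 1 := by omega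
    obtain ⟨t, ht, h1⟩ := C.first_seg
    have hv := seg1_vert C hσ
    rw [h1] at hv
    rw [show σ.length + 1 = 2 from by omega] at hx0
    dsimp at hv
    omega
  obtain ⟨m, hm⟩ : ∃ m, σ.length = m + 2 := ⟨σ.length - 2, by omega⟩
  have hx3 : (C.pts (m + 3)).1 = 0 := by rw [show m + 3 = σ.length + 1 from by omega]; exact hx0
  have hy3 : (C.pts (m + 3)).2 = b := by rw [show m + 3 = σ.length + 1 from by omega]; exact hy0
  set D := chainMap (strip s 1) id (strip_mono hs (by norm_num)) strictMono_id
    (strip_zero s 1) rfl C with hDdef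
  have hD : ∀ k, D.pts k = (strip s 1 (C.pts k).1, (C.pts k).2) := fun _ => rfl
  have haxn := C.axis_parallel (m + 2) (by omega)
  rw [show m + 2 + 1 = m + 3 from rfl] at haxn
  rcases haxn with ⟨a1, a2⟩ | ⟨a1, a2⟩
  · -- last segment vertical; use shift2
    have hcx : (C.pts (m + 2)).1 = 0 := by omega
    -- segment m+1 horizontal
    have hax1 := C.axis_parallel (m + 1) (by omega)
    rw [show m + 1 + 1 = m + 2 from rfl] at hax1
    have hseg : (C.pts (m + 2)).2 = (C.pts (m + 1)).2 ∧ (C.pts (m + 2)).1 ≠ (C.pts (m + 1)).1 := by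
      rcases hax1 with ⟨b1, b2⟩ | ⟨b1, b2⟩
      · exfalso
        have := (perp C (show m + 1 < σ.length by omega)).1 b1
        rw [show m + 1 + 1 = m + 2 from rfl, show m + 1 + 2 = m + 3 from rfl] at this
        exact a2 this
      · exact ⟨b1, b2⟩
    obtain ⟨b1, b2⟩ := hseg
    have he0 : (C.pts (m + 1)).1 ≠ 0 := by omega
    obtain ⟨fne, fiff, fpos, fneg⟩ := strip_facts hs (C.pts (m + 1)).1
    have hE0 : strip s 1 (C.pts (m + 1)).1 ≠ 0 := by
      intro hcon; exact he0 (fiff.mp hcon)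
    -- segment m vertical
    have hsegm : (C.pts (m + 1)).1 = (C.pts m).1 := by
      rcases C.axis_parallel m (by omega) with ⟨c1, c2⟩ | ⟨c1, c2⟩
      · exact c1
      · exfalso
        have := (perp C (show m < σ.length by omega)).2 c1
        rw [show m + 1 + 1 = m + 2 from rfl] at this
        exact b2 this
    have hvv : strip s 1 (C.pts m).1 = strip s 1 (C.pts (m + 1)).1 := by rw [hsegm]
    -- freshCol hypotheses
    have hfc := freshCol C hs (by rw [hm, show m + 2 + 1 = m + 3 from rfl]; omega)
      (by rw [hm, show m + 2 + 1 = m + 3 from rfl]; omega)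
    rw [hm] at hfc
    simp only [show m + 2 + 1 = m + 3 from rfl] at hfc
    apply shift2 D m (by rw [hm]) ((s, (C.pts (m + 2)).2) : ℤ × ℤ) ((s, b) : ℤ × ℤ)
    · -- hdir1
      simp only [hD]
      unfold unitDir
      rw [Prod.ext_iff]
      try dsimp only
      constructor
      · rw [hcx, strip_zero]
        apply sign_congr
        omega
      · rw [b1]
    · simp only [hD]
      try dsimp only
      rw [hcx, hx3, strip_zero]
      all_goals omega
    · simp only [hD]
      try dsimp only
      rw [hy3]
      all_goals omega
    · -- H4
      apply Set.eq_singleton_iff_unique_mem.mpr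
      constructor
      · exact ⟨⟨min_le_right _ _, le_max_right _ _, min_le_right _ _, le_max_right _ _⟩,
          ⟨min_le_left _ _, le_max_left _ _, min_le_left _ _, le_max_left _ _⟩⟩
      · intro x hx
        obtain ⟨hx1, hx2⟩ := hx
        rw [mem_segSet] at hx1 hx2
        simp only [hD] at hx1 hx2 ⊢
        try dsimp only at hx1 hx2
        rw [Prod.ext_iff]
        try dsimp only
        omega
    · -- H5
      apply Set.eq_singleton_iff_unique_mem.mpr
      constructor
      · exact ⟨⟨min_le_right _ _, le_max_right _ _, min_le_right _ _, le_max_right _ _⟩,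
          ⟨min_le_left _ _, le_max_left _ _, min_le_left _ _, le_max_left _ _⟩⟩
      · intro x hx
        obtain ⟨hx1, hx2⟩ := hx
        rw [mem_segSet] at hx1 hx2
        simp only [hD] at hx1 hx2
        try dsimp only at hx1 hx2
        rw [Prod.ext_iff]
        try dsimp only
        omega
    · -- H2
      intro i hi
      apply Set.eq_empty_iff_forall_notMem.mpr
      intro x hx
      obtain ⟨hx1, hx2⟩ := hx
      rw [mem_segSet] at hx2
      simp only [hD] at hx2
      try dsimp only at hx2
      by_cases hxs : x.1 = s
      · have hxeq : x = ((s, (C.pts (m + 2)).2) : ℤ × ℤ) := by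
          rw [Prod.ext_iff]; constructor
          · exact hxs
          · dsimp only; omega
        rw [hxeq] at hx1
        exact hfc i (by omega) (C.pts (m + 2)).2 (by omega) (by omega) hx1
      · have hnon := D.simple_nonadj i (m + 1) (by omega) (by rw [hm]; omega)
        rw [Set.eq_empty_iff_forall_notMem] at hnon
        apply hnon x
        refine ⟨hx1, ?_⟩
        rw [mem_segSet]
        simp only [hD]
        try dsimp only
        rw [show m + 1 + 1 = m + 2 from rfl]
        constructor
        · rw [hcx, strip_zero]; omega
        constructor
        · rw [hcx, strip_zero]; omega
        · omega
    · -- H3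
      intro i hi
      apply Set.eq_empty_iff_forall_notMem.mpr
      intro x hx
      obtain ⟨hx1, hx2⟩ := hx
      rw [mem_segSet] at hx2
      try dsimp only at hx2
      have hxeq : x = ((s, x.2) : ℤ × ℤ) := by rw [Prod.ext_iff]; dsimp only; omega
      rw [hxeq] at hx1
      exact hfc i (by omega) x.2 (by omega) (by omega) hx1
  · -- last segment horizontal; use newend
    have hcy : (C.pts (m + 2)).2 = b := by omega
    have he0 : (C.pts (m + 2)).1 ≠ 0 := by omega
    obtain ⟨fne, fiff, fpos, fneg⟩ := strip_facts hs (C.pts (m + 2)).1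
    have hE0 : strip s 1 (C.pts (m + 2)).1 ≠ 0 := by
      intro hcon; exact he0 (fiff.mp hcon)
    -- segment m+1 vertical
    have hsegm : (C.pts (m + 2)).1 = (C.pts (m + 1)).1 := by
      rcases C.axis_parallel (m + 1) (by omega) with ⟨c1, c2⟩ | ⟨c1, c2⟩
      · rw [show m + 1 + 1 = m + 2 from rfl] at c1; exact c1
      · exfalso
        have := (perp C (show m + 1 < σ.length by omega)).2 c1
        rw [show m + 1 + 2 = m + 3 from rfl, show m + 1 + 1 = m + 2 from rfl] at this
        exact a2 this
    have hfc := freshCol C hs (by rw [hm, show m + 2 + 1 = m + 3 from rfl]; omega)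
      (by rw [hm, show m + 2 + 1 = m + 3 from rfl]; omega)
    rw [hm] at hfc
    simp only [show m + 2 + 1 = m + 3 from rfl] at hfc
    have hend : D.pts (σ.length + 1) = ((0 : ℤ), b) := by
      rw [hD, hC]; dsimp only; rw [strip_zero]
    apply newend D (by omega) ((s, b) : ℤ × ℤ)
    · rw [hm]
      simp only [hD]
      simp only [show m + 2 + 1 = m + 3 from rfl]
      unfold unitDir
      rw [Prod.ext_iff]
      try dsimp only
      constructor
      · rw [hx3, strip_zero]
        apply sign_congr
        omega
      · rw [hy3, hcy]
    · intro i hilt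
      rw [hm] at hilt
      intro p hp
      obtain ⟨hp1, hp2⟩ := hp
      rw [hm]
      simp only [show m + 2 + 1 = m + 3 from rfl]
      rw [mem_segSet] at hp2
      simp only [hD] at hp2
      try dsimp only at hp2
      rw [hm] at hp2  -- no-op guard
      refine ⟨hp1, ?_⟩
      rw [mem_segSet]
      simp only [hD]
      try dsimp only
      by_cases hps : p.1 = s
      · exfalso
        rcases Nat.lt_or_ge (i + 1) (m + 2) with hi2 | hi2
        · have hpeq : p = ((s, p.2) : ℤ × ℤ) := by rw [Prod.ext_iff]; dsimp only; omega
          rw [hpeq] at hp1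
          exact hfc i hi2 p.2 (by omega) (by omega) hp1
        · -- i = m + 1 : segment vertical at x = strip (C.pts (m+1)).1 ≠ s
          have hieq : i = m + 1 := by omega
          rw [hieq] at hp1
          rw [mem_segSet] at hp1
          simp only [hD] at hp1
          try dsimp only at hp1
          rw [show m + 1 + 1 = m + 2 from rfl] at hp1
          have hvv : strip s 1 (C.pts (m + 1)).1 = strip s 1 (C.pts (m + 2)).1 := by
            rw [hsegm]
          have := (strip_facts hs (C.pts (m + 1)).1).1
          omega
      · rw [hx3, strip_zero] at *
        omega

lemma nudgeV {σ : List Turn} (hσ : 1 ≤ σ.length) {a : ℤ} (ha : a ≠ 0)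
    (h : ((a, 0) : ℤ × ℤ) ∈ ReachSet σ) {s : ℤ} (hs : s = 1 ∨ s = -1) :
    ((a, s) : ℤ × ℤ) ∈ ReachSet σ := by
  obtain ⟨C, hC⟩ := h
  have hx0 : (C.pts (σ.length + 1)).1 = a := by rw [hC]
  have hy0 : (C.pts (σ.length + 1)).2 = 0 := by rw [hC]
  have hn2 : 2 ≤ σ.length := by
    by_contra hlt
    have hn1 : σ.length = 1 := by omega
    obtain ⟨t, ht, h1⟩ := C.first_seg
    have hv := seg1_vert C hσ
    have hax := C.axis_parallel 1 (by omega)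
    rw [show (1 : ℕ) + 1 = 2 from rfl] at hax
    rw [show σ.length + 1 = 2 from by omega] at hx0 hy0
    have h12 : (C.pts 1).2 = 0 := by rw [h1]
    rcases hax with ⟨c1, c2⟩ | ⟨c1, c2⟩
    · omega
    · exact c2 hv
  obtain ⟨m, hm⟩ : ∃ m, σ.length = m + 2 := ⟨σ.length - 2, by omega⟩
  have hx3 : (C.pts (m + 3)).1 = a := by rw [show m + 3 = σ.length + 1 from by omega]; exact hx0
  have hy3 : (C.pts (m + 3)).2 = 0 := by rw [show m + 3 = σ.length + 1 from by omega]; exact hy0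
  set D := chainMap id (strip s 1) strictMono_id (strip_mono hs (by norm_num))
    rfl (strip_zero s 1) C with hDdef
  have hD : ∀ k, D.pts k = ((C.pts k).1, strip s 1 (C.pts k).2) := fun _ => rfl
  have haxn := C.axis_parallel (m + 2) (by omega)
  rw [show m + 2 + 1 = m + 3 from rfl] at haxn
  rcases haxn with ⟨a1, a2⟩ | ⟨a1, a2⟩
  · -- last segment vertical; use newend
    have hcx : (C.pts (m + 2)).1 = a := by omega
    have he0 : (C.pts (m + 2)).2 ≠ 0 := by omega
    obtain ⟨fne, fiff, fpos, fneg⟩ := strip_facts hs (C.pts (m + 2)).2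
    have hE0 : strip s 1 (C.pts (m + 2)).2 ≠ 0 := by
      intro hcon; exact he0 (fiff.mp hcon)
    -- segment m+1 horizontal
    have hsegm : (C.pts (m + 2)).2 = (C.pts (m + 1)).2 := by
      rcases C.axis_parallel (m + 1) (by omega) with ⟨c1, c2⟩ | ⟨c1, c2⟩
      · exfalso
        have := (perp C (show m + 1 < σ.length by omega)).1 c1
        rw [show m + 1 + 2 = m + 3 from rfl, show m + 1 + 1 = m + 2 from rfl] at this
        exact a2 this
      · rw [show m + 1 + 1 = m + 2 from rfl] at c1; exact c1
    have hfr := freshRow C hs (by rw [hm, show m + 2 + 1 = m + 3 from rfl]; omega)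
      (by rw [hm, show m + 2 + 1 = m + 3 from rfl]; omega)
    rw [hm] at hfr
    simp only [show m + 2 + 1 = m + 3 from rfl] at hfr
    apply newend D (by omega) ((a, s) : ℤ × ℤ)
    · rw [hm]
      simp only [hD]
      simp only [show m + 2 + 1 = m + 3 from rfl]
      unfold unitDir
      rw [Prod.ext_iff]
      try dsimp only
      constructor
      · rw [hx3, hcx]
      · rw [hy3, strip_zero]
        apply sign_congr
        omega
    · intro i hilt
      rw [hm] at hilt
      intro p hp
      obtain ⟨hp1, hp2⟩ := hp
      rw [hm]
      simp only [show m + 2 + 1 = m + 3 from rfl]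
      rw [mem_segSet] at hp2
      simp only [hD] at hp2
      try dsimp only at hp2
      rw [hm] at hp2
      refine ⟨hp1, ?_⟩
      rw [mem_segSet]
      simp only [hD]
      try dsimp only
      by_cases hps : p.2 = s
      · exfalso
        rcases Nat.lt_or_ge (i + 1) (m + 2) with hi2 | hi2
        · have hpeq : p = ((p.1, s) : ℤ × ℤ) := by rw [Prod.ext_iff]; try dsimp only; omega
          rw [hpeq] at hp1
          exact hfr i hi2 p.1 (by omega) (by omega) hp1
        · have hieq : i = m + 1 := by omega
          rw [hieq] at hp1
          rw [mem_segSet] at hp1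
          simp only [hD] at hp1
          try dsimp only at hp1
          rw [show m + 1 + 1 = m + 2 from rfl] at hp1
          have hvv : strip s 1 (C.pts (m + 1)).2 = strip s 1 (C.pts (m + 2)).2 := by
            rw [hsegm]
          have := (strip_facts hs (C.pts (m + 1)).2).1
          omega
      · rw [hy3, strip_zero] at *
        omega
  · -- last segment horizontal; use shift2
    have hcy : (C.pts (m + 2)).2 = 0 := by omega
    have hax1 := C.axis_parallel (m + 1) (by omega)
    rw [show m + 1 + 1 = m + 2 from rfl] at hax1
    have hseg : (C.pts (m + 2)).1 = (C.pts (m + 1)).1 ∧ (C.pts (m + 2)).2 ≠ (C.pts (m + 1)).2 := by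
      rcases hax1 with ⟨b1, b2⟩ | ⟨b1, b2⟩
      · exact ⟨b1, b2⟩
      · exfalso
        have := (perp C (show m + 1 < σ.length by omega)).2 b1
        rw [show m + 1 + 1 = m + 2 from rfl, show m + 1 + 2 = m + 3 from rfl] at this
        exact a2 this
    obtain ⟨b1, b2⟩ := hseg
    have he0 : (C.pts (m + 1)).2 ≠ 0 := by omega
    obtain ⟨fne, fiff, fpos, fneg⟩ := strip_facts hs (C.pts (m + 1)).2
    have hE0 : strip s 1 (C.pts (m + 1)).2 ≠ 0 := by
      intro hcon; exact he0 (fiff.mp hcon)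
    -- segment m horizontal
    have hsegm : (C.pts (m + 1)).2 = (C.pts m).2 := by
      rcases C.axis_parallel m (by omega) with ⟨c1, c2⟩ | ⟨c1, c2⟩
      · exfalso
        have := (perp C (show m < σ.length by omega)).1 c1
        rw [show m + 1 + 1 = m + 2 from rfl] at this
        exact b2 this
      · exact c1
    have hvv : strip s 1 (C.pts m).2 = strip s 1 (C.pts (m + 1)).2 := by rw [hsegm]
    have hfr := freshRow C hs (by rw [hm, show m + 2 + 1 = m + 3 from rfl]; omega)
      (by rw [hm, show m + 2 + 1 = m + 3 from rfl]; omega)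
    rw [hm] at hfr
    simp only [show m + 2 + 1 = m + 3 from rfl] at hfr
    apply shift2 D m (by rw [hm]) (((C.pts (m + 2)).1, s) : ℤ × ℤ) ((a, s) : ℤ × ℤ)
    · simp only [hD]
      unfold unitDir
      rw [Prod.ext_iff]
      try dsimp only
      constructor
      · rw [b1]
      · rw [hcy, strip_zero]
        apply sign_congr
        omega
    · simp only [hD]
      try dsimp only
      rw [hx3]
      all_goals omega
    · simp only [hD]
      try dsimp only
      rw [hcy, hy3, strip_zero]
      all_goals omega
    · -- H4
      apply Set.eq_singleton_iff_unique_mem.mpr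
      constructor
      · exact ⟨⟨min_le_right _ _, le_max_right _ _, min_le_right _ _, le_max_right _ _⟩,
          ⟨min_le_left _ _, le_max_left _ _, min_le_left _ _, le_max_left _ _⟩⟩
      · intro x hx
        obtain ⟨hx1, hx2⟩ := hx
        rw [mem_segSet] at hx1 hx2
        simp only [hD] at hx1 hx2 ⊢
        try dsimp only at hx1 hx2
        rw [Prod.ext_iff]
        try dsimp only
        omega
    · -- H5
      apply Set.eq_singleton_iff_unique_mem.mpr
      constructor
      · exact ⟨⟨min_le_right _ _, le_max_right _ _, min_le_right _ _, le_max_right _ _⟩,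
          ⟨min_le_left _ _, le_max_left _ _, min_le_left _ _, le_max_left _ _⟩⟩
      · intro x hx
        obtain ⟨hx1, hx2⟩ := hx
        rw [mem_segSet] at hx1 hx2
        simp only [hD] at hx1 hx2
        try dsimp only at hx1 hx2
        rw [Prod.ext_iff]
        try dsimp only
        omega
    · -- H2
      intro i hi
      apply Set.eq_empty_iff_forall_notMem.mpr
      intro x hx
      obtain ⟨hx1, hx2⟩ := hx
      rw [mem_segSet] at hx2
      simp only [hD] at hx2
      try dsimp only at hx2
      by_cases hxs : x.2 = s
      · have hxeq : x = ((x.1, s) : ℤ × ℤ) := by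
          rw [Prod.ext_iff]; try dsimp only
          exact ⟨rfl, hxs⟩
        rw [hxeq] at hx1
        exact hfr i (by omega) x.1 (by omega) (by omega) hx1
      · have hnon := D.simple_nonadj i (m + 1) (by omega) (by rw [hm]; omega)
        rw [Set.eq_empty_iff_forall_notMem] at hnon
        apply hnon x
        refine ⟨hx1, ?_⟩
        rw [mem_segSet]
        simp only [hD]
        try dsimp only
        rw [show m + 1 + 1 = m + 2 from rfl]
        constructor
        · omega
        constructor
        · omega
        constructor
        · rw [hcy, strip_zero]; omega
        · rw [hcy, strip_zero]; omega
    · -- H3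
      intro i hi
      apply Set.eq_empty_iff_forall_notMem.mpr
      intro x hx
      obtain ⟨hx1, hx2⟩ := hx
      rw [mem_segSet] at hx2
      try dsimp only at hx2
      have hxeq : x = ((x.1, s) : ℤ × ℤ) := by
        rw [Prod.ext_iff]; try dsimp only
        constructor
        · rfl
        · omega
      rw [hxeq] at hx1
      exact hfr i (by omega) x.1 (by omega) (by omega) hx1

/-- **Stretching Lemma, parts (2) and (3).** If `σ` has at least one turn, then:
if `(0, b)` with `b ≠ 0` is reachable by `σ`, the whole halfplane `H⁺((0,b))` is
contained in `A(σ)`; and if `(a, 0)` with `a ≠ 0` is reachable by `σ`, the whole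
halfplane `V⁺((a,0))` is contained in `A(σ)`. -/
theorem stretching_lemma_halfplanes (σ : List Turn) (hσ : 1 ≤ σ.length) :
    (∀ b : ℤ, b ≠ 0 → ((0 : ℤ), b) ∈ ReachSet σ → Hplus (0, b) ⊆ ReachSet σ) ∧
    (∀ a : ℤ, a ≠ 0 → (a, (0 : ℤ)) ∈ ReachSet σ → Vplus (a, 0) ⊆ ReachSet σ) := by
  constructor
  · intro b hb h q hq
    simp only [Hplus, Set.mem_setOf_eq] at hq
    obtain ⟨i, j, hj, hqe⟩ := hq
    try dsimp only at hqe
    subst hqe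
    have hsb : b.sign = 1 ∨ b.sign = -1 := by
      rcases lt_or_gt_of_ne hb with h' | h'
      · exact Or.inr (Int.sign_eq_neg_one_of_neg h')
      · exact Or.inl (Int.sign_eq_one_of_pos h')
    have hsbb : 0 < b.sign * b := by
      rcases lt_or_gt_of_ne hb with h' | h'
      · rw [Int.sign_eq_neg_one_of_neg h']; omega
      · rw [Int.sign_eq_one_of_pos h']; omega
    have e2 : strip b.sign j b = b + b.sign * j := by
      unfold strip; rw [if_neg (not_le.mpr hsbb)]
    rcases lt_trichotomy i 0 with hi | hi | hi
    · have h1 := nudgeH hσ hb h (Or.inr rfl)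
      have h2 := reach_map (strip (-1) (-i - 1)) (strip b.sign j)
        (strip_mono (Or.inr rfl) (by omega)) (strip_mono hsb (by omega))
        (strip_zero _ _) (strip_zero _ _) h1
      have e1 : strip (-1) (-i - 1) (-1) = i := by unfold strip; split_ifs <;> omega
      rw [e1, e2] at h2
      exact h2
    · subst hi
      have h2 := reach_map id (strip b.sign j) strictMono_id (strip_mono hsb (by omega))
        rfl (strip_zero _ _) h
      rw [e2] at h2
      exact h2
    · have h1 := nudgeH hσ hb h (Or.inl rfl)
      have h2 := reach_map (strip 1 (i - 1)) (strip b.sign j)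
        (strip_mono (Or.inl rfl) (by omega)) (strip_mono hsb (by omega))
        (strip_zero _ _) (strip_zero _ _) h1
      have e1 : strip 1 (i - 1) 1 = i := by unfold strip; split_ifs <;> omega
      rw [e1, e2] at h2
      exact h2
  · intro a ha h q hq
    simp only [Vplus, Set.mem_setOf_eq] at hq
    obtain ⟨i, j, hi, hqe⟩ := hq
    try dsimp only at hqe
    subst hqe
    have hsa : a.sign = 1 ∨ a.sign = -1 := by
      rcases lt_or_gt_of_ne ha with h' | h'
      · exact Or.inr (Int.sign_eq_neg_one_of_neg h')
      · exact Or.inl (Int.sign_eq_one_of_pos h')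
    have hsaa : 0 < a.sign * a := by
      rcases lt_or_gt_of_ne ha with h' | h'
      · rw [Int.sign_eq_neg_one_of_neg h']; omega
      · rw [Int.sign_eq_one_of_pos h']; omega
    have e2 : strip a.sign i a = a + a.sign * i := by
      unfold strip; rw [if_neg (not_le.mpr hsaa)]
    rcases lt_trichotomy j 0 with hj | hj | hj
    · have h1 := nudgeV hσ ha h (Or.inr rfl)
      have h2 := reach_map (strip a.sign i) (strip (-1) (-j - 1))
        (strip_mono hsa (by omega)) (strip_mono (Or.inr rfl) (by omega))
        (strip_zero _ _) (strip_zero _ _) h1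
      have e1 : strip (-1) (-j - 1) (-1) = j := by unfold strip; split_ifs <;> omega
      rw [e1, e2] at h2
      exact h2
    · subst hj
      have h2 := reach_map (strip a.sign i) id (strip_mono hsa (by omega)) strictMono_id
        (strip_zero _ _) rfl h
      rw [e2] at h2
      exact h2
    · have h1 := nudgeV hσ ha h (Or.inl rfl)
      have h2 := reach_map (strip a.sign i) (strip 1 (j - 1))
        (strip_mono hsa (by omega)) (strip_mono (Or.inl rfl) (by omega))
        (strip_zero _ _) (strip_zero _ _) h1
      have e1 : strip 1 (j - 1) 1 = j := by unfold strip; split_ifs <;> omega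
      rw [e1, e2] at h2
      exact h2
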